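/- arXiv:1806.02810 — 2 statements merged into one kernel-verified Lean document; each statement's English description precedes it below -/
import Mathlib

section
/- Let f be a continuous map on a metric space X. If x is a topologically transitive point of f and f has a dense set of periodic points at x, and there exists a periodic point q with d(x, O(q)) ≥ δ/2 for some δ > 0, then x is a sensitive point of f with sensitivity constant δ/8. -/
/-- The set of periodic points of `f`. -/
def PerSet {X : Type*} (f : X → X) : Set X :=
  {x | ∃ m : ℕ, 1 ≤ m ∧ f^[m] x = x}

theorem stmt_17 {X : Type*} [MetricSpace X] (f : X → X) (hf : Continuous f) (x : X)
    (htrans : ∀ U : Set X, IsOpen U → x ∈ U → ∀ V : Set X, IsOpen V → V.Nonempty →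
      ∃ n : ℕ, 1 ≤ n ∧ (f^[n] '' U ∩ V).Nonempty)
    (hdense : ∀ U : Set X, IsOpen U → x ∈ U → ∃ p ∈ U, p ≠ x ∧ p ∈ PerSet f)
    (δ : ℝ) (hδ : 0 < δ) (q : X) (hq : q ∈ PerSet f)
    (hfar : ∀ i : ℕ, δ / 2 ≤ dist x (f^[i] q)) :
    ∀ U : Set X, IsOpen U → x ∈ U →
      ∃ y ∈ U, ∃ n : ℕ, 1 ≤ n ∧ δ / 8 < dist (f^[n] x) (f^[n] y) := by
  intro U hU hxU
  set ε : ℝ := δ / 8 with hε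
  have hεpos : 0 < ε := by positivity
  -- the shrunken neighborhood
  set W : Set X := U ∩ Metric.ball x ε with hW
  have hWopen : IsOpen W := hU.inter Metric.isOpen_ball
  have hxW : x ∈ W := ⟨hxU, Metric.mem_ball_self hεpos⟩
  -- a periodic point p in W
  obtain ⟨p, hpW, -, m, hm1, hpm⟩ := hdense W hWopen hxW
  -- the target set V around the orbit of q
  set V : Set X := ⋂ i ∈ Finset.range (m + 1), f^[i] ⁻¹' Metric.ball (f^[i] q) ε with hV
  have hVopen : IsOpen V := by
    apply isOpen_biInter_finset
    intro i _
    exact (Metric.isOpen_ball).preimage (hf.iterate i)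
  have hVne : V.Nonempty := by
    refine ⟨q, ?_⟩
    simp only [hV, Set.mem_iInter, Set.mem_preimage, Metric.mem_ball]
    intro i _
    simpa using hεpos
  -- transitivity: some point of W lands in V
  obtain ⟨n, hn1, w, ⟨z, hzW, hzw⟩, hwV⟩ := htrans W hWopen hxW V hVopen hVne
  -- choose k with 1 ≤ k ≤ m and n + k a multiple of m
  set k : ℕ := m - n % m with hk
  have hkm : k ≤ m := Nat.sub_le _ _
  have hk1 : 1 ≤ k := by
    have h := Nat.mod_lt n (show 0 < m by omega)
    omega
  set N : ℕ := n + k with hN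
  have hNmul : N = m * (n / m + 1) := by
    have h1 : m * (n / m) + n % m = n := Nat.div_add_mod n m
    have h2 : n % m < m := Nat.mod_lt n (by omega)
    have h3 : m * (n / m + 1) = m * (n / m) + m := by ring
    simp only [hN, hk]
    omega
  -- f^[N] p = p
  have hpN : f^[N] p = p := by
    rw [hNmul, Function.iterate_mul]
    exact Function.iterate_fixed hpm _
  -- f^[N] z is ε-close to f^[k] q
  have hzN : dist (f^[N] z) (f^[k] q) < ε := by
    have hzV : f^[n] z ∈ V := by rw [hzw]; exact hwV
    have : f^[n] z ∈ f^[k] ⁻¹' Metric.ball (f^[k] q) ε := by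
      have := Set.mem_iInter.mp (hV ▸ hzV) k
      have := Set.mem_iInter.mp this (Finset.mem_range.mpr (by omega))
      exact this
    have hmem : f^[k] (f^[n] z) ∈ Metric.ball (f^[k] q) ε := this
    have : f^[N] z = f^[k] (f^[n] z) := by
      rw [hN, Nat.add_comm, Function.iterate_add_apply]
    rw [this]
    exact Metric.mem_ball.mp hmem
  -- dist x p < ε
  have hxp : dist x p < ε := by
    have := hpW.2
    rw [Metric.mem_ball, dist_comm] at this
    exact this
  -- far estimate
  have hfark : δ / 2 ≤ dist x (f^[k] q) := hfar k
  -- triangle: dist (f^[N] p) (f^[N] z) > 2ε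
  have hkey : 2 * ε < dist (f^[N] p) (f^[N] z) := by
    have htri : dist x (f^[k] q) ≤
        dist x (f^[N] p) + dist (f^[N] p) (f^[N] z) + dist (f^[N] z) (f^[k] q) :=
      dist_triangle4 _ _ _ _
    have hxpN : dist x (f^[N] p) < ε := by rw [hpN]; exact hxp
    have : δ / 2 = 4 * ε := by rw [hε]; ring
    linarith
  have hN1 : 1 ≤ N := by omega
  by_cases hcase : ε < dist (f^[N] x) (f^[N] p)
  · exact ⟨p, hpW.1, N, hN1, hcase⟩
  · refine ⟨z, hzW.1, N, hN1, ?_⟩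
    push_neg at hcase
    have htri : dist (f^[N] p) (f^[N] z) ≤
        dist (f^[N] p) (f^[N] x) + dist (f^[N] x) (f^[N] z) := dist_triangle _ _ _
    rw [dist_comm (f^[N] p) (f^[N] x)] at htri
    linarith
end

section
/- Let f be a uniformly continuous surjective map on a metric space X. If f has two distinct specification points, then the Bowen entropy of f is positive; indeed h(f) ≥ (log 2)/M where M = M(ε) is a common specification constant for ε with d(x,y) > 3ε. -/
open Filter ENNReal
open Topology

/-- `M` is a specification constant for `f` at `x` for tolerance `ε`. -/
def IsSpecConstAt {X : Type*} [MetricSpace X] (f : X → X) (x : X) (ε : ℝ) (M : ℕ) : Prop :=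
  ∀ (k : ℕ) (xs : ℕ → X) (a b : ℕ → ℕ), 1 ≤ k → xs 1 = x →
    (∀ j, 1 ≤ j → j ≤ k → a j ≤ b j) →
    (∀ j, 2 ≤ j → j ≤ k → b (j - 1) + M ≤ a j) →
    ∃ y : X, ∀ j, 1 ≤ j → j ≤ k → ∀ i, a j ≤ i → i ≤ b j →
      dist (f^[i] y) (f^[i] (xs j)) < ε

/-- `x` is a specification point of `f`. -/
def SpecPoint {X : Type*} [MetricSpace X] (f : X → X) (x : X) : Prop :=
  ∀ ε > 0, ∃ M : ℕ, IsSpecConstAt f x ε M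

/-- `F` is an `(n, ε)`-separated set for `f`. -/
def IsSeparatedIn {X : Type*} [MetricSpace X] (f : X → X) (n : ℕ) (ε : ℝ) (F : Set X) : Prop :=
  ∀ x ∈ F, ∀ y ∈ F, x ≠ y → ∃ i < n, ε < dist (f^[i] x) (f^[i] y)

/-- `s_n(ε, K)`: the largest cardinality of an `(n, ε)`-separated subset of `K`. -/
noncomputable def sepMaxcard {X : Type*} [MetricSpace X]
    (f : X → X) (n : ℕ) (ε : ℝ) (K : Set X) : ℕ∞ :=
  ⨆ (F : Finset X) (_ : ↑F ⊆ K ∧ IsSeparatedIn f n ε ↑F), (F.card : ℕ∞)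

/-- `s(ε, K)`: the exponential growth rate of `s_n(ε, K)`. -/
noncomputable def sepEntropyAt {X : Type*} [MetricSpace X]
    (f : X → X) (ε : ℝ) (K : Set X) : EReal :=
  atTop.limsup fun n : ℕ => ENNReal.log (sepMaxcard f n ε K : ℝ≥0∞) / (n : EReal)

/-- The Bowen entropy of `f`: `sup_K lim_{ε → 0} s(ε, K)`, where the limit as `ε → 0` of the
antitone quantity `s(ε, K)` is its supremum over `ε > 0`. -/
noncomputable def bowenEntropy {X : Type*} [MetricSpace X] (f : X → X) : EReal :=
  ⨆ (K : Set X) (_ : IsCompact K) (ε : ℝ) (_ : 0 < ε), sepEntropyAt f ε K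

/-- A specification constant can be enlarged. -/
lemma IsSpecConstAt.mono {X : Type*} [MetricSpace X] {f : X → X} {x : X} {ε : ℝ} {M M' : ℕ}
    (h : IsSpecConstAt f x ε M) (hle : M ≤ M') : IsSpecConstAt f x ε M' := by
  intro k xs a b hk h1 hab hgap
  exact h k xs a b hk h1 hab (fun j h2 h3 => le_trans (by omega) (hgap j h2 h3))

/-- The key construction: from a specification constant `M` at tolerance `ε` and another
specification constant `M'` at tolerance `δ`, we find, for each binary word of length `n`,
points within `δ` of `x` that are pairwise `ε`-separated by time `M' + n*M`. -/
lemma exists_sep_family {X : Type*} [MetricSpace X] (f : X → X)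
    (hsurj : Function.Surjective f) (x y : X) (ε δ : ℝ) (M M' n : ℕ)
    (h1 : IsSpecConstAt f x ε M) (h2 : IsSpecConstAt f x δ M')
    (hsep : 3 * ε + 2 * δ < dist x y) :
    ∃ P : (Fin n → Bool) → X, (∀ w, dist (P w) x < δ) ∧
      ∀ w w', w ≠ w' → ∃ i, i ≤ M' + n * M ∧ ε < dist (f^[i] (P w)) (f^[i] (P w')) := by
  classical
  set c : Bool → X := fun b => bif b then y else x with hc
  have hit : ∀ m : ℕ, Function.Surjective (f^[m]) := fun m => hsurj.iterate m
  have main : ∀ w : Fin n → Bool, ∃ p, dist p x < δ ∧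
      ∀ t : Fin n, dist (f^[M' + (t.val + 1) * M] p) (c (w t)) < ε + δ := by
    intro w
    set w' : ℕ → Bool := fun s => if h : s < n then w ⟨s, h⟩ else false with hw'
    set zz : ℕ → X := fun j => (hit (M' + (j - 1) * M) (c (w' (j - 2)))).choose with hzz
    have hzzspec : ∀ j, f^[M' + (j - 1) * M] (zz j) = c (w' (j - 2)) :=
      fun j => (hit (M' + (j - 1) * M) (c (w' (j - 2)))).choose_spec
    set xs : ℕ → X := fun j => if 2 ≤ j ∧ j ≤ n + 1 then zz j else x with hxs
    set aa : ℕ → ℕ := fun j => M' + (j - 1) * M with haa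
    obtain ⟨q, hq⟩ := h1 (n + 1) xs aa aa (by omega)
      (by simp only [hxs]; rw [if_neg (by omega)])
      (fun j _ _ => le_refl _)
      (by
        intro j hj2 _
        simp only [haa]
        have e : j - 1 = (j - 1 - 1) + 1 := by omega
        have e2 : (j - 1) * M = (j - 1 - 1) * M + M := by
          conv_lhs => rw [e, add_mul, one_mul]
        omega)
    have hq' : ∀ t : Fin n, dist (f^[M' + (t.val + 1) * M] q) (c (w t)) < ε := by
      intro t
      have htn : t.val < n := t.isLt
      have ht := hq (t.val + 2) (by omega) (by omega) (M' + (t.val + 2 - 1) * M)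
        (le_refl _) (le_refl _)
      have hx1 : xs (t.val + 2) = zz (t.val + 2) := by
        simp only [hxs]; rw [if_pos (by omega)]
      rw [hx1] at ht
      have hx2 : f^[M' + (t.val + 2 - 1) * M] (zz (t.val + 2)) = c (w' (t.val + 2 - 2)) :=
        hzzspec (t.val + 2)
      rw [hx2] at ht
      have hx3 : w' (t.val + 2 - 2) = w t := by
        have e : t.val + 2 - 2 = t.val := by omega
        rw [e]
        simp only [hw']
        rw [dif_pos t.isLt]
      have e4 : t.val + 2 - 1 = t.val + 1 := by omega
      rw [hx3] at ht
      rw [e4] at ht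
      exact ht
    obtain ⟨p, hp⟩ := h2 2 (fun j => if j = 2 then q else x)
      (fun j => if j = 2 then M' else 0) (fun j => if j = 2 then M' + n * M else 0)
      (by omega) (by simp)
      (by intro j _ _; by_cases h : j = 2 <;> simp [h])
      (by
        intro j hj2 hj2'
        have hj : j = 2 := by omega
        subst hj
        simp)
    refine ⟨p, ?_, ?_⟩
    · have h0 := hp 1 (by omega) (by omega) 0 (by simp) (by simp)
      simpa using h0
    · intro t
      have htn : t.val < n := t.isLt
      have hibnd : (t.val + 1) * M ≤ n * M := Nat.mul_le_mul_right M (by omega)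
      have hd := hp 2 (by omega) (le_refl 2) (M' + (t.val + 1) * M)
        (by simp) (by simpa using Nat.add_le_add_left hibnd M')
      simp only [if_pos rfl] at hd
      calc dist (f^[M' + (t.val + 1) * M] p) (c (w t))
          ≤ dist (f^[M' + (t.val + 1) * M] p) (f^[M' + (t.val + 1) * M] q)
            + dist (f^[M' + (t.val + 1) * M] q) (c (w t)) := dist_triangle _ _ _
        _ < δ + ε := add_lt_add hd (hq' t)
        _ = ε + δ := add_comm _ _
  choose P hP1 hP2 using main
  refine ⟨P, hP1, ?_⟩
  intro w w' hne
  obtain ⟨t, ht⟩ := Function.ne_iff.mp hne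
  have htn : t.val < n := t.isLt
  have hibnd : (t.val + 1) * M ≤ n * M := Nat.mul_le_mul_right M (by omega)
  refine ⟨M' + (t.val + 1) * M, Nat.add_le_add_left hibnd M', ?_⟩
  have e : dist (c (w t)) (c (w' t)) = dist x y := by
    cases hb : w t <;> cases hb' : w' t <;>
      simp [hc, hb, hb', dist_comm] at ht ⊢
  have tri : dist (c (w t)) (c (w' t)) ≤
      dist (c (w t)) (f^[M' + (t.val + 1) * M] (P w))
      + dist (f^[M' + (t.val + 1) * M] (P w)) (f^[M' + (t.val + 1) * M] (P w'))
      + dist (f^[M' + (t.val + 1) * M] (P w')) (c (w' t)) := dist_triangle4 _ _ _ _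
  have b1 : dist (c (w t)) (f^[M' + (t.val + 1) * M] (P w)) < ε + δ := by
    rw [dist_comm]; exact hP2 w t
  have b2 : dist (f^[M' + (t.val + 1) * M] (P w')) (c (w' t)) < ε + δ := hP2 w' t
  rw [e] at tri
  linarith

/-- Elementary real arithmetic used in the entropy estimate. -/
lemma arith_aux (c l m m' lg : ℝ) (hl0 : 0 ≤ l) (hm'0 : 0 ≤ m') (hMr : 1 ≤ m)
    (hlogpos : 0 < lg) (hloglt : lg < 1) (hld : 1 < l * (lg / m - c))
    (hc : c < lg / m) :
    c * ((m' + 1) * ((l + 1) * m + 1)) ≤ (l + 1) * (m' + 1) * lg := by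
  have hm0 : (0:ℝ) < m := by linarith
  have hcm : c * m < lg := by
    have := (lt_div_iff₀ hm0).mp hc
    linarith
  have hprod : l * (lg / m - c) * m = l * lg - l * c * m := by
    field_simp
  have h5 : m * 1 < m * (l * (lg / m - c)) := mul_lt_mul_of_pos_left hld hm0
  have h2' : c * l * m ≤ l * lg - m := by nlinarith [hprod, h5]
  have h4 : c < 1 := by
    have hle : lg / m ≤ lg := div_le_self hlogpos.le hMr
    linarith
  have hkey : c * ((l + 1) * m + 1) ≤ (l + 1) * lg := by nlinarith [h2', hcm, h4]
  nlinarith [mul_le_mul_of_nonneg_left hkey (by linarith : (0:ℝ) ≤ m' + 1)]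

/-- The main quantitative lemma. -/
lemma key_entropy_bound {X : Type*} [MetricSpace X] (f : X → X)
    (hsurj : Function.Surjective f) (x y : X) (ε : ℝ) (hε : 0 < ε)
    (hd : 3 * ε < dist x y) (M : ℕ) (hM : 0 < M)
    (hxM : IsSpecConstAt f x ε M) (hx : SpecPoint f x) :
    ((Real.log 2 / M : ℝ) : EReal) ≤ bowenEntropy f := by
  classical
  set δ0 : ℝ := (dist x y - 3 * ε) / 2 with hδ0def
  have hδ0 : 0 < δ0 := by rw [hδ0def]; linarith
  set δ : ℕ → ℝ := fun ℓ => δ0 / (ℓ + 2) with hδdef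
  have hδval : ∀ ℓ : ℕ, δ ℓ = δ0 / (ℓ + 2) := fun ℓ => rfl
  have hδpos : ∀ ℓ, 0 < δ ℓ := fun ℓ => div_pos hδ0 (by positivity)
  have hδsep : ∀ ℓ, 3 * ε + 2 * δ ℓ < dist x y := by
    intro ℓ
    have h2 : δ ℓ ≤ δ0 / 2 := by
      rw [hδval]
      apply div_le_div_of_nonneg_left hδ0.le (by norm_num)
      have : (0:ℝ) ≤ (ℓ : ℝ) := Nat.cast_nonneg ℓ
      linarith
    rw [hδ0def] at h2
    linarith
  choose M' hM' using fun ℓ => hx (δ ℓ) (hδpos ℓ)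
  set nn : ℕ → ℕ := fun ℓ => (ℓ + 1) * (M' ℓ + 1) with hnn
  have hnnval : ∀ ℓ, nn ℓ = (ℓ + 1) * (M' ℓ + 1) := fun ℓ => rfl
  set T : ℕ → ℕ := fun ℓ => M' ℓ + nn ℓ * M + 1 with hT
  have hTval : ∀ ℓ, T ℓ = M' ℓ + nn ℓ * M + 1 := fun ℓ => rfl
  choose P hP1 hP2 using fun ℓ =>
    exists_sep_family f hsurj x y ε (δ ℓ) M (M' ℓ) (nn ℓ) hxM (hM' ℓ) (hδsep ℓ)
  set v : (Σ ℓ : ℕ, (Fin (nn ℓ) → Bool)) → X := fun i => P i.1 i.2 with hv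
  have hvt : Tendsto v cofinite (𝓝 x) := by
    rw [Metric.tendsto_nhds]
    intro r hr
    rw [Filter.eventually_cofinite]
    obtain ⟨L, hL⟩ := exists_nat_gt (δ0 / r)
    apply Set.Finite.subset (s := {i : Σ ℓ : ℕ, (Fin (nn ℓ) → Bool) | i.1 < L})
    · apply Set.Finite.subset ((Set.finite_Iio L).biUnion
        (fun ℓ _ => Set.finite_range (Sigma.mk ℓ)))
      intro i hi
      simp only [Set.mem_setOf_eq] at hi
      simp only [Set.mem_iUnion, Set.mem_range]
      exact ⟨i.1, Set.mem_Iio.mpr hi, i.2, rfl⟩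
    · intro i hi
      simp only [Set.mem_setOf_eq] at hi ⊢
      by_contra hL'
      push_neg at hL'
      apply hi
      have h1 : dist (v i) x < δ i.1 := hP1 i.1 i.2
      have h2 : δ i.1 < r := by
        rw [hδval, div_lt_iff₀ (by positivity)]
        have hδ0L : δ0 < L * r := by
          have := (div_lt_iff₀ hr).mp hL
          linarith
        have hLi : (L : ℝ) ≤ (i.1 : ℝ) := Nat.cast_le.mpr hL'
        nlinarith [mul_le_mul_of_nonneg_right hLi hr.le]
      linarith
  have hK : IsCompact (insert x (Set.range v)) := hvt.isCompact_insert_range_of_cofinite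
  set K := insert x (Set.range v) with hKdef
  have hcard : ∀ ℓ n, T ℓ ≤ n → ((2 ^ nn ℓ : ℕ) : ℕ∞) ≤ sepMaxcard f n ε K := by
    intro ℓ n hn
    set F : Finset X := Finset.image (P ℓ) Finset.univ with hF
    have hinj : Function.Injective (P ℓ) := by
      intro w w' h
      by_contra hne
      obtain ⟨i, _, hlt⟩ := hP2 ℓ w w' hne
      rw [h, dist_self] at hlt
      linarith
    have hcardF : F.card = 2 ^ nn ℓ := by
      rw [hF, Finset.card_image_of_injective _ hinj, Finset.card_univ]
      simp [Fintype.card_fun]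
    have hsub : ↑F ⊆ K := by
      intro p hp
      simp only [hF, Finset.coe_image, Finset.coe_univ, Set.image_univ, Set.mem_range] at hp
      obtain ⟨w, rfl⟩ := hp
      exact Set.mem_insert_iff.mpr (Or.inr ⟨⟨ℓ, w⟩, rfl⟩)
    have hsepF : IsSeparatedIn f n ε ↑F := by
      intro p hp q hq hne
      simp only [hF, Finset.coe_image, Finset.coe_univ, Set.image_univ, Set.mem_range]
        at hp hq
      obtain ⟨w, rfl⟩ := hp
      obtain ⟨w', rfl⟩ := hq
      obtain ⟨i, hi, hlt⟩ := hP2 ℓ w w' (fun h => hne (by rw [h]))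
      refine ⟨i, lt_of_lt_of_le ?_ hn, hlt⟩
      rw [hTval]
      exact Nat.lt_succ_of_le hi
    calc ((2 ^ nn ℓ : ℕ) : ℕ∞) = (F.card : ℕ∞) := by rw [hcardF]
      _ ≤ sepMaxcard f n ε K := le_iSup_of_le F (le_iSup_of_le ⟨hsub, hsepF⟩ le_rfl)
  have hent : ((Real.log 2 / M : ℝ) : EReal) ≤ sepEntropyAt f ε K := by
    unfold sepEntropyAt
    by_contra hcon
    push_neg at hcon
    obtain ⟨c, hc1, hc2⟩ := EReal.exists_between_coe_real hcon
    have hc2' : c < Real.log 2 / M := EReal.coe_lt_coe_iff.mp hc2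
    have hMr : (1 : ℝ) ≤ (M : ℝ) := by exact_mod_cast hM
    have hlog2pos : 0 < Real.log 2 := Real.log_pos one_lt_two
    have hlog2lt : Real.log 2 < 1 := by
      have := Real.log_two_lt_d9
      linarith
    have hdpos : 0 < Real.log 2 / M - c := by linarith
    have hfreq : ∃ᶠ n in atTop,
        (c : EReal) ≤ ENNReal.log (sepMaxcard f n ε K : ℝ≥0∞) / (n : EReal) := by
      rw [Filter.frequently_atTop]
      intro N
      obtain ⟨ℓ₀, hℓ₀⟩ := exists_nat_gt (1 / (Real.log 2 / M - c))
      set ℓ := max N ℓ₀ with hℓ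
      have hNℓ : N ≤ ℓ := le_max_left _ _
      have hℓ₀ℓ : ℓ₀ ≤ ℓ := le_max_right _ _
      have hTge : N ≤ T ℓ := by
        calc N ≤ ℓ := hNℓ
          _ ≤ ℓ + 1 := Nat.le_succ _
          _ ≤ nn ℓ := by rw [hnnval]; exact Nat.le_mul_of_pos_right _ (by omega)
          _ ≤ nn ℓ * M := Nat.le_mul_of_pos_right _ hM
          _ ≤ T ℓ := by rw [hTval]; exact le_trans (Nat.le_add_left _ _) (Nat.le_succ _)
      refine ⟨T ℓ, hTge, ?_⟩
      have hTpos : (0 : ℝ) < (T ℓ : ℝ) := by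
        have h0 : 0 < T ℓ := by rw [hTval]; exact Nat.succ_pos _
        exact_mod_cast h0
      have hlog : ((nn ℓ * Real.log 2 : ℝ) : EReal)
          ≤ ENNReal.log (sepMaxcard f (T ℓ) ε K : ℝ≥0∞) := by
        have h1 := hcard ℓ (T ℓ) le_rfl
        have h2 : ((2 : ℝ≥0∞) ^ nn ℓ) ≤ (sepMaxcard f (T ℓ) ε K : ℝ≥0∞) := by
          have h3 : (((2 ^ nn ℓ : ℕ) : ℕ∞) : ℝ≥0∞) ≤ (sepMaxcard f (T ℓ) ε K : ℝ≥0∞) :=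
            ENat.toENNReal_le.mpr h1
          calc ((2 : ℝ≥0∞) ^ nn ℓ) = (((2 ^ nn ℓ : ℕ) : ℕ∞) : ℝ≥0∞) := by
                rw [ENat.toENNReal_coe]; push_cast; ring
            _ ≤ _ := h3
        have hlogtwo : ENNReal.log (2 : ℝ≥0∞) = ((Real.log 2 : ℝ) : EReal) := by
          rw [ENNReal.log_pos_real (by norm_num) (by norm_num)]
          norm_num
        calc ((nn ℓ * Real.log 2 : ℝ) : EReal)
            = ENNReal.log ((2 : ℝ≥0∞) ^ nn ℓ) := by
              rw [ENNReal.log_pow, hlogtwo, ← EReal.coe_coe_eq_natCast, ← EReal.coe_mul]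
          _ ≤ _ := ENNReal.log_monotone h2
      have hTE : ((T ℓ : ℕ) : EReal) = (((T ℓ : ℕ) : ℝ) : EReal) := by
        rw [EReal.coe_coe_eq_natCast]
      have hTEpos : (0 : EReal) < (((T ℓ : ℕ) : ℝ) : EReal) := EReal.coe_pos.mpr hTpos
      have hdiv : ((nn ℓ * Real.log 2 : ℝ) : EReal) / ((T ℓ : ℕ) : EReal)
          ≤ ENNReal.log (sepMaxcard f (T ℓ) ε K : ℝ≥0∞) / ((T ℓ : ℕ) : EReal) := by
        rw [hTE]
        exact EReal.div_le_div_right_of_nonneg hTEpos.le hlog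
      refine le_trans ?_ hdiv
      rw [hTE, ← EReal.coe_div, EReal.coe_le_coe_iff, le_div_iff₀ hTpos]
      -- real arithmetic: c * T ℓ ≤ nn ℓ * log 2
      have hTvalR : ((T ℓ : ℕ) : ℝ) = ((M' ℓ : ℝ) + 1) * (((ℓ : ℝ) + 1) * M + 1) := by
        rw [hTval, hnnval]
        push_cast
        ring
      have hnnvalR : ((nn ℓ : ℕ) : ℝ) = ((ℓ : ℝ) + 1) * ((M' ℓ : ℝ) + 1) := by
        rw [hnnval]; push_cast; ring
      rw [hTvalR, hnnvalR]
      have hld : 1 < (ℓ : ℝ) * (Real.log 2 / M - c) := by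
        have h1 : 1 / (Real.log 2 / M - c) < (ℓ₀ : ℝ) := hℓ₀
        have h2 : (ℓ₀ : ℝ) ≤ (ℓ : ℝ) := Nat.cast_le.mpr hℓ₀ℓ
        have h3 := (div_lt_iff₀ hdpos).mp (lt_of_lt_of_le h1 h2)
        linarith
      exact arith_aux c (ℓ : ℝ) (M : ℝ) (M' ℓ : ℝ) (Real.log 2)
        (Nat.cast_nonneg _) (Nat.cast_nonneg _) hMr hlog2pos hlog2lt hld hc2'
    exact absurd (Filter.le_limsup_of_frequently_le hfreq) (not_le.mpr hc1)
  have hfin : sepEntropyAt f ε K ≤ bowenEntropy f :=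
    le_iSup_of_le K (le_iSup_of_le hK (le_iSup_of_le ε (le_iSup_of_le hε le_rfl)))
  exact hent.trans hfin

theorem stmt_19 {X : Type*} [MetricSpace X] (f : X → X)
    (hf : UniformContinuous f) (hsurj : Function.Surjective f)
    (x y : X) (hxy : x ≠ y) (hx : SpecPoint f x) (hy : SpecPoint f y) :
    0 < bowenEntropy f ∧
      ∀ ε > 0, 3 * ε < dist x y → ∀ M : ℕ, 0 < M →
        IsSpecConstAt f x ε M → IsSpecConstAt f y ε M →
          ((Real.log 2 / M : ℝ) : EReal) ≤ bowenEntropy f := by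
  have key : ∀ ε > 0, 3 * ε < dist x y → ∀ M : ℕ, 0 < M →
      IsSpecConstAt f x ε M → IsSpecConstAt f y ε M →
        ((Real.log 2 / M : ℝ) : EReal) ≤ bowenEntropy f := by
    intro ε hε hd M hM hxM _
    exact key_entropy_bound f hsurj x y ε hε hd M hM hxM hx
  refine ⟨?_, key⟩
  have hd : 0 < dist x y := dist_pos.mpr hxy
  set ε : ℝ := dist x y / 4 with hεdef
  have hε : 0 < ε := by positivity
  have h3 : 3 * ε < dist x y := by rw [hεdef]; linarith
  obtain ⟨M₁, h1⟩ := hx ε hε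
  obtain ⟨M₂, h2⟩ := hy ε hε
  set M : ℕ := max M₁ M₂ + 1 with hMdef
  have hM : 0 < M := by rw [hMdef]; omega
  have hb := key ε hε h3 M hM (h1.mono (by rw [hMdef]; omega)) (h2.mono (by rw [hMdef]; omega))
  refine lt_of_lt_of_le ?_ hb
  apply EReal.coe_pos.mpr
  apply div_pos (Real.log_pos one_lt_two)
  exact_mod_cast hM
end
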